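/- The maximally coherent state attains the maximal coherence: for |φ⟩ = (1/√d) ∑_j e^{iφ_j}|j⟩ and ρ_d = |φ⟩⟨φ|, one has C_q(ρ_d) = (d^{(q-1)/q} − 1)/(q−1) for q ∈ (0,1). -/

import Mathlib

open Matrix
open scoped ComplexOrder

/-- Real power of a Hermitian matrix via its spectral decomposition
(defined to be `0` on non-Hermitian matrices). -/
noncomputable def mpow {d : ℕ} (A : Matrix (Fin d) (Fin d) ℂ) (r : ℝ) :
    Matrix (Fin d) (Fin d) ℂ :=
  if hA : A.IsHermitian then
    (hA.eigenvectorUnitary : Matrix (Fin d) (Fin d) ℂ) *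
      Matrix.diagonal (fun i => ((hA.eigenvalues i ^ r : ℝ) : ℂ)) *
      star (hA.eigenvectorUnitary : Matrix (Fin d) (Fin d) ℂ)
  else 0

/-- The Tsallis relative operator entropy
`T_q(ρ‖σ) = (ρ^{1/2} (ρ^{-1/2} σ ρ^{-1/2})^{1-q} ρ^{1/2} - ρ)/(1-q)`. -/
noncomputable def Tq {d : ℕ} (ρ σ : Matrix (Fin d) (Fin d) ℂ) (q : ℝ) :
    Matrix (Fin d) (Fin d) ℂ :=
  (((1 - q : ℝ) : ℂ))⁻¹ •
    (mpow ρ (1/2) * mpow (mpow ρ (-(1/2)) * σ * mpow ρ (-(1/2))) (1 - q) * mpow ρ (1/2) - ρ)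


/-- `f_q(ρ,σ) = Tr[ρ^{1/2} (ρ^{-1/2} σ ρ^{-1/2})^{1-q} ρ^{1/2}]` (as a real number). -/
noncomputable def fq {d : ℕ} (ρ σ : Matrix (Fin d) (Fin d) ℂ) (q : ℝ) : ℝ :=
  (mpow ρ (1/2) * mpow (mpow ρ (-(1/2)) * σ * mpow ρ (-(1/2))) (1 - q) * mpow ρ (1/2)).trace.re

lemma mpow_of_sq {n : ℕ} (A : Matrix (Fin n) (Fin n) ℂ) (hA : A.IsHermitian)
    (c : ℝ) (hc : 0 < c) (h : A * A = ((c : ℂ)) • A) (r : ℝ) (hr : r ≠ 0) :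
    mpow A r = ((c ^ (r - 1) : ℝ) : ℂ) • A := by
  set U : Matrix (Fin n) (Fin n) ℂ := (hA.eigenvectorUnitary : Matrix (Fin n) (Fin n) ℂ) with hU
  have hUU : star U * U = 1 := (Matrix.mem_unitaryGroup_iff').mp hA.eigenvectorUnitary.2
  set D : Matrix (Fin n) (Fin n) ℂ := Matrix.diagonal (RCLike.ofReal ∘ hA.eigenvalues) with hD
  have hspec : A = U * D * star U := hA.spectral_theorem
  have cancel : ∀ M : Matrix (Fin n) (Fin n) ℂ, star U * (U * M * star U) * U = M := by
    intro M
    calc star U * (U * M * star U) * U = (star U * U) * M * (star U * U) := by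
          simp only [Matrix.mul_assoc]
      _ = M := by rw [hUU, Matrix.one_mul, Matrix.mul_one]
  have hDD : D * D = (c : ℂ) • D := by
    have h2 : U * (D * D) * star U = U * ((c : ℂ) • D) * star U := by
      have key : star U * (U * (D * star U)) = D * star U := by
        rw [← Matrix.mul_assoc, hUU, Matrix.one_mul]
      calc U * (D * D) * star U = (U * D * star U) * (U * D * star U) := by
            simp only [Matrix.mul_assoc]; rw [key]
        _ = (c : ℂ) • (U * D * star U) := by rw [← hspec, h]
        _ = U * ((c : ℂ) • D) * star U := by rw [Matrix.mul_smul, Matrix.smul_mul]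
    have h3 := congrArg (fun M => star U * M * U) h2
    rwa [cancel, cancel] at h3
  have heig : ∀ i, hA.eigenvalues i ^ r = c ^ (r - 1) * hA.eigenvalues i := by
    intro i
    have h4 : ((hA.eigenvalues i * hA.eigenvalues i : ℝ) : ℂ)
        = ((c * hA.eigenvalues i : ℝ) : ℂ) := by
      have h5 := congrFun (congrFun hDD i) i
      simpa [hD, Matrix.diagonal_mul_diagonal, Matrix.diagonal_apply_eq,
        Matrix.smul_apply, smul_eq_mul] using h5
    have hreal : hA.eigenvalues i * hA.eigenvalues i = c * hA.eigenvalues i :=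
      Complex.ofReal_injective h4
    have hfac : hA.eigenvalues i * (hA.eigenvalues i - c) = 0 := by ring_nf; linarith
    rcases mul_eq_zero.mp hfac with h0 | h0
    · rw [h0, Real.zero_rpow hr, mul_zero]
    · have h0 : hA.eigenvalues i = c := by linarith
      rw [h0, Real.rpow_sub hc, Real.rpow_one]
      field_simp
  have hdiag : Matrix.diagonal (fun i => ((hA.eigenvalues i ^ r : ℝ) : ℂ))
      = ((c ^ (r - 1) : ℝ) : ℂ) • D := by
    rw [hD]
    ext i j
    by_cases hij : i = j
    · subst hij
      simp [Matrix.diagonal_apply_eq, Matrix.smul_apply, heig i]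
    · simp [Matrix.diagonal_apply_ne _ hij, Matrix.smul_apply]
  rw [mpow, dif_pos hA, hdiag, Matrix.mul_smul, Matrix.smul_mul, ← hspec]


lemma fq_eval {d : ℕ} (hd : 0 < d) (φ : Fin d → ℝ) (p : Fin d → ℝ)
    (hp : ∑ i, p i = 1) (q : ℝ) (hq0 : 0 < q) (hq1 : q < 1) :
    fq (Matrix.of fun i j =>
        (d : ℂ)⁻¹ * Complex.exp (Complex.I * φ i) * Complex.exp (-(Complex.I * φ j)))
      (Matrix.diagonal (fun i => (p i : ℂ))) q = (d : ℝ) ^ (q - 1) := by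
  set ρ : Matrix (Fin d) (Fin d) ℂ := Matrix.of fun i j =>
      (d : ℂ)⁻¹ * Complex.exp (Complex.I * φ i) * Complex.exp (-(Complex.I * φ j)) with hρ
  set σ : Matrix (Fin d) (Fin d) ℂ := Matrix.diagonal (fun i => (p i : ℂ)) with hσ
  have hd0 : (0:ℝ) < (d:ℝ) := by exact_mod_cast hd
  have hdC : (d:ℂ) ≠ 0 := by exact_mod_cast hd.ne'
  have hexp : ∀ k : Fin d, Complex.exp (-(Complex.I * φ k)) * Complex.exp (Complex.I * φ k) = 1 := by
    intro k; rw [← Complex.exp_add]; simp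
  -- Hermitian
  have hHerm : ρ.IsHermitian := by
    show ρᴴ = ρ
    ext i j
    simp only [Matrix.conjTranspose_apply, hρ, Matrix.of_apply, star_mul', Complex.star_def,
      ← Complex.exp_conj, _root_.map_mul, map_neg, Complex.conj_I, Complex.conj_ofReal, map_inv₀,
      Complex.conj_natCast]
    simp only [neg_mul, neg_neg]
    ring
  -- ρ is idempotent
  have hρ2 : ρ * ρ = ρ := by
    ext i j
    rw [Matrix.mul_apply]
    have hterm : ∀ k : Fin d, ρ i k * ρ k j
        = (d:ℂ)⁻¹ * ρ i j := by
      intro k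
      simp only [hρ, Matrix.of_apply]
      linear_combination ((d:ℂ)⁻¹ * (d:ℂ)⁻¹ * Complex.exp (Complex.I * φ i) *
        Complex.exp (-(Complex.I * φ j))) * hexp k
    rw [Finset.sum_congr rfl fun k _ => hterm k, Finset.sum_const, Finset.card_univ,
      Fintype.card_fin, nsmul_eq_mul, ← mul_assoc, mul_inv_cancel₀ hdC, one_mul]
  -- ρ σ ρ
  have hB : ρ * σ * ρ = ((d:ℂ))⁻¹ • ρ := by
    ext i j
    rw [Matrix.mul_apply]
    have hterm : ∀ k : Fin d, (ρ * σ) i k * ρ k j = (p k : ℂ) * ((d:ℂ)⁻¹ * ρ i j) := by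
      intro k
      rw [hσ, Matrix.mul_diagonal]
      simp only [hρ, Matrix.of_apply]
      linear_combination ((p k : ℂ) * (d:ℂ)⁻¹ * (d:ℂ)⁻¹ * Complex.exp (Complex.I * φ i) *
        Complex.exp (-(Complex.I * φ j))) * hexp k
    rw [Finset.sum_congr rfl fun k _ => hterm k, ← Finset.sum_mul]
    have hpsum : (∑ k, (p k : ℂ)) = 1 := by
      have := congrArg (fun x : ℝ => (x : ℂ)) hp
      push_cast at this
      simpa using this
    rw [hpsum, one_mul, Matrix.smul_apply, smul_eq_mul]
  have hBH : (ρ * σ * ρ).IsHermitian := by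
    show (ρ * σ * ρ)ᴴ = ρ * σ * ρ
    rw [hB, Matrix.conjTranspose_smul, hHerm.eq]
    congr 1
    simp
  -- powers of ρ
  have h1 : ρ * ρ = ((1:ℝ):ℂ) • ρ := by rw [hρ2]; simp
  have hm1 : mpow ρ (1/2) = ρ := by
    have := mpow_of_sq ρ hHerm 1 one_pos h1 (1/2) (by norm_num)
    simpa [Real.one_rpow] using this
  have hm2 : mpow ρ (-(1/2)) = ρ := by
    have := mpow_of_sq ρ hHerm 1 one_pos h1 (-(1/2)) (by norm_num)
    simpa [Real.one_rpow] using this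
  -- power of B
  have hBB : (ρ * σ * ρ) * (ρ * σ * ρ) = (((d:ℝ)⁻¹ : ℝ):ℂ) • (ρ * σ * ρ) := by
    rw [hB, smul_mul_assoc, mul_smul_comm, hρ2, smul_smul]
    push_cast
    rw [smul_smul]
  have hmB : mpow (ρ * σ * ρ) (1 - q) = (((d:ℝ)⁻¹ ^ (1 - q - 1) : ℝ):ℂ) • (ρ * σ * ρ) :=
    mpow_of_sq _ hBH _ (by positivity) hBB (1 - q) (by linarith)
  -- trace of ρ
  have htr : ρ.trace = 1 := by
    rw [Matrix.trace]
    have : ∀ i : Fin d, ρ.diag i = (d:ℂ)⁻¹ := by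
      intro i
      simp only [Matrix.diag_apply, hρ, Matrix.of_apply]
      rw [mul_assoc, mul_comm (Complex.exp (Complex.I * φ i)), hexp i, mul_one]
    rw [Finset.sum_congr rfl fun i _ => this i, Finset.sum_const, Finset.card_univ,
      Fintype.card_fin, nsmul_eq_mul, mul_inv_cancel₀ hdC]
  -- assemble
  set k : ℂ := (((d:ℝ)⁻¹ ^ (1 - q - 1) : ℝ):ℂ) with hk
  have hX : ρ * (k • (ρ * σ * ρ)) * ρ = (k * (d:ℂ)⁻¹) • ρ := by
    calc ρ * (k • (ρ * σ * ρ)) * ρ = k • (ρ * (ρ * σ * ρ) * ρ) := by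
          rw [mul_smul_comm, smul_mul_assoc]
      _ = k • (ρ * ((d:ℂ)⁻¹ • ρ) * ρ) := by rw [hB]
      _ = (k * (d:ℂ)⁻¹) • (ρ * ρ * ρ) := by
          rw [mul_smul_comm, smul_mul_assoc, smul_smul]
      _ = (k * (d:ℂ)⁻¹) • ρ := by rw [hρ2, hρ2]
  rw [fq, hm1, hm2, hmB, hX, Matrix.trace_smul, htr, smul_eq_mul, mul_one]
  have hcast : k * (d:ℂ)⁻¹ = (((((d:ℝ)⁻¹ ^ (1 - q - 1) : ℝ)) * (d:ℝ)⁻¹ : ℝ) : ℂ) := by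
    rw [hk]; push_cast; ring
  rw [hcast, Complex.ofReal_re]
  rw [show (1 - q - 1 : ℝ) = -q by ring, Real.inv_rpow hd0.le, ← Real.rpow_neg hd0.le,
    neg_neg, ← Real.rpow_neg_one (d:ℝ), ← Real.rpow_add hd0]
  ring_nf

theorem maximally_coherent_state_coherence {d : ℕ} (hd : 0 < d) (φ : Fin d → ℝ)
    (q : ℝ) (hq0 : 0 < q) (hq1 : q < 1) :
    IsLeast {c : ℝ | ∃ p : Fin d → ℝ, (∀ i, 0 ≤ p i) ∧ ∑ i, p i = 1 ∧
        c = ((fq (Matrix.of fun i j =>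
              (d : ℂ)⁻¹ * Complex.exp (Complex.I * φ i) * Complex.exp (-(Complex.I * φ j)))
            (Matrix.diagonal (fun i => (p i : ℂ))) q) ^ (1 / q) - 1) / (q - 1)}
      (((d : ℝ) ^ ((q - 1) / q) - 1) / (q - 1)) := by
  have hd0 : (0:ℝ) < (d:ℝ) := by exact_mod_cast hd
  have hval : ∀ p : Fin d → ℝ, ∑ i, p i = 1 →
      ((fq (Matrix.of fun i j =>
            (d : ℂ)⁻¹ * Complex.exp (Complex.I * φ i) * Complex.exp (-(Complex.I * φ j)))
          (Matrix.diagonal (fun i => (p i : ℂ))) q) ^ (1 / q) - 1) / (q - 1)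
        = (((d : ℝ) ^ ((q - 1) / q) - 1) / (q - 1)) := by
    intro p hp1
    rw [fq_eval hd φ p hp1 q hq0 hq1]
    rw [show ((d:ℝ) ^ ((q-1) : ℝ)) ^ ((1/q) : ℝ) = (d:ℝ) ^ (((q-1) * (1/q)) : ℝ) from
      (Real.rpow_mul hd0.le _ _).symm, mul_one_div]
  constructor
  · refine ⟨fun _ => (d:ℝ)⁻¹, fun i => by positivity, ?_, ?_⟩
    · rw [Finset.sum_const, Finset.card_univ, Fintype.card_fin, nsmul_eq_mul,
        mul_inv_cancel₀ hd0.ne']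
    · exact (hval _ (by rw [Finset.sum_const, Finset.card_univ, Fintype.card_fin,
        nsmul_eq_mul, mul_inv_cancel₀ hd0.ne'])).symm
  · rintro c ⟨p, hp0, hp1, rfl⟩
    rw [hval p hp1]
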